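/- arXiv:1901.10432 — 2 statements merged into one kernel-verified Lean document; each statement's English description precedes it below -/
import Mathlib

section
/- Suppose the ℤ²-subshift Y is a recoding of the ℤ²-subshift X via a finite set F ⊆ ℤ², and let ℓ be a rational ray that is nonexpansive (for X, equivalently for Y). Then ℓ is closing for X if and only if ℓ is closing for Y. -/
namespace PolygonalShifts

abbrev Z2 : Type := ℤ × ℤ

abbrev Config (A : Type*) : Type _ := Z2 → A

/-- The translation action of `ℤ²` on configurations. -/
def shiftAct {A : Type*} (u : Z2) (x : Config A) : Config A := fun w => x (u + w)

/-- A `ℤ²`-subshift: a closed (for the product topology, with the alphabet discrete)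
and translation-invariant set of configurations. -/
def IsSubshift {A : Type*} (X : Set (Config A)) : Prop :=
  (letI : TopologicalSpace A := ⊥
   IsClosed X) ∧
  ∀ u : Z2, ∀ x ∈ X, shiftAct u x ∈ X

/-- The canonical embedding `ℤ² → ℝ²`. -/
def toR2 (p : Z2) : ℝ × ℝ := ((p.1 : ℝ), (p.2 : ℝ))

/-- `S` X-codes `S'`, for subsets `S, S'` of `ℝ²`. -/
def Codes {A : Type*} (X : Set (Config A)) (S S' : Set (ℝ × ℝ)) : Prop :=
  ∀ x ∈ X, ∀ x' ∈ X,
    (∀ p : Z2, toR2 p ∈ S → x p = x' p) →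
    ∀ p : Z2, toR2 p ∈ S' → x p = x' p

/-- `S` X-codes `S'`, for subsets `S, S'` of `ℤ²`. -/
def CodesZ {A : Type*} (X : Set (Config A)) (S S' : Set Z2) : Prop :=
  ∀ x ∈ X, ∀ x' ∈ X, (∀ p ∈ S, x p = x' p) → ∀ p ∈ S', x p = x' p

/-- `Y` is a recoding of `X` via the finite set `F ⊆ ℤ²`. -/
def IsRecodingVia {A A' : Type*} (X : Set (Config A)) (Y : Set (Config A'))
    (F : Set Z2) : Prop :=
  letI : TopologicalSpace A := ⊥
  letI : TopologicalSpace A' := ⊥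
  ∃ Ψ : X ≃ₜ Y,
    (∀ (u : Z2) (x x' : X), (x' : Config A) = shiftAct u (x : Config A) →
      (↑(Ψ x') : Config A') = shiftAct u (↑(Ψ x) : Config A')) ∧
    (∀ (u : Z2) (x x' : X),
      (↑(Ψ x) : Config A') u = (↑(Ψ x') : Config A') u ↔
        ∀ f ∈ F, (x : Config A) (f + u) = (x' : Config A) (f + u))

/-- `Y` is a recoding of `X`. -/
def IsRecoding {A A' : Type*} (X : Set (Config A)) (Y : Set (Config A')) : Prop :=
  ∃ F : Set Z2, F.Finite ∧ IsRecodingVia X Y F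

/-- Integer cross product. -/
def crossZ (u v : Z2) : ℤ := u.1 * v.2 - u.2 * v.1

/-- Real cross product. -/
def crossR (u v : ℝ × ℝ) : ℝ := u.1 * v.2 - u.2 * v.1

/-- A convex integer polygon, given by its (at least three) vertices listed in
counterclockwise order: every vertex lies strictly to the left of every directed edge. -/
structure IntPolygon where
  n : ℕ
  vert : Fin (n + 3) → Z2
  convex : ∀ i j : Fin (n + 3), j ≠ i → j ≠ i + 1 →
    0 < crossZ (vert (i + 1) - vert i) (vert j - vert i)

namespace IntPolygon

/-- The oriented edge vector from vertex `i` to vertex `i+1`. -/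
def edgeVec (P : IntPolygon) (i : Fin (P.n + 3)) : Z2 := P.vert (i + 1) - P.vert i

/-- The polygon as a subset of `ℝ²` (the convex hull of its vertices). -/
def carrier (P : IntPolygon) : Set (ℝ × ℝ) :=
  convexHull ℝ (Set.range fun i => toR2 (P.vert i))

lemma crossZ_smul (m : ℤ) (u v : Z2) : crossZ (m • u) (m • v) = m ^ 2 * crossZ u v := by
  simp only [crossZ, Prod.smul_fst, Prod.smul_snd, smul_eq_mul]
  ring

/-- The dilation of a polygon by a positive integer factor about the origin. -/
def dilate (P : IntPolygon) (m : ℤ) (hm : 0 < m) : IntPolygon where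
  n := P.n
  vert := fun i => m • P.vert i
  convex := by
    intro i j hj hj1
    have h := P.convex i j hj hj1
    have e1 : m • P.vert (i + 1) - m • P.vert i = m • (P.vert (i + 1) - P.vert i) :=
      (smul_sub m _ _).symm
    have e2 : m • P.vert j - m • P.vert i = m • (P.vert j - P.vert i) :=
      (smul_sub m _ _).symm
    rw [e1, e2, crossZ_smul]
    exact mul_pos (pow_pos hm 2) h

end IntPolygon

/-- `P` is a coding polygon for `X`: for each vertex `w`, the polygon with `w`
removed X-codes `w`. -/
def IsCodingPolygon {A : Type*} (X : Set (Config A)) (P : IntPolygon) : Prop :=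
  ∀ i : Fin (P.n + 3),
    Codes X (P.carrier \ {toR2 (P.vert i)}) {toR2 (P.vert i)}

/-- `X` is polygonal with respect to `P`. -/
def Polygonal {A : Type*} (X : Set (Config A)) (P : IntPolygon) : Prop :=
  X.Infinite ∧ IsCodingPolygon X P

/-- The closed half plane `H_v = {w : v₁ w₂ − v₂ w₁ ≥ 0}` to the left of the direction `v`. -/
def leftHalfPlane (v : ℝ × ℝ) : Set (ℝ × ℝ) := {w | 0 ≤ v.1 * w.2 - v.2 * w.1}

/-- The ray directed by `v` is expansive for `X`: `H_v` X-codes all of `ℝ²`. -/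
def ExpansiveRay {A : Type*} (X : Set (Config A)) (v : ℝ × ℝ) : Prop :=
  Codes X (leftHalfPlane v) Set.univ

/-- For a primitive integer direction `v`, the line `L₀`: the translate of `L = ℝ·v`
by an integer vector, lying outside `H_v` and closest to `L`. -/
def lineL0 (v : Z2) : Set (ℝ × ℝ) := {w | (v.1 : ℝ) * w.2 - (v.2 : ℝ) * w.1 = -1}

/-- A block of `m` consecutive lattice points on `L₀`, starting at `z`. -/
def blockOn (v z : Z2) (m : ℕ) : Set (ℝ × ℝ) :=
  (fun k : ℕ => toR2 (z + (k : ℤ) • v)) '' {k | k < m}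

/-- The (nonexpansive) rational ray directed by the primitive vector `v` is closing for `X`. -/
def ClosingRay {A : Type*} (X : Set (Config A)) (v : Z2) : Prop :=
  ∃ N : ℕ, ∀ z : Z2, v.1 * z.2 - v.2 * z.1 = -1 →
    ∀ m : ℕ, N ≤ m →
      Codes X (leftHalfPlane (toR2 v) ∪ blockOn v z m) (lineL0 v)

/-- The sector (with vertex the origin) determined by the rays through `e₁` and `e₂`:
lattice points on either ray or strictly between them. -/
def SectorZ (e₁ e₂ : Z2) : Set Z2 :=
  {p | SameRay ℝ (toR2 e₁) (toR2 p) ∨ SameRay ℝ (toR2 e₂) (toR2 p) ∨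
       (0 < crossZ e₁ p ∧ 0 < crossZ p e₂)}

/-- The rational sector determined by `(e₁, e₂)` is corner coding for `X`. -/
def IsCornerCoding {A : Type*} (X : Set (Config A)) (e₁ e₂ : Z2) : Prop :=
  CodesZ X (SectorZ e₁ e₂ \ {0}) {0}

/-- The rational sector determined by `(e₁, e₂)` is weakly corner coding for `X`. -/
def IsWeaklyCornerCoding {A : Type*} (X : Set (Config A)) (e₁ e₂ : Z2) : Prop :=
  ∃ F₀ : Set Z2, F₀.Finite ∧ F₀ ⊆ SectorZ e₁ e₂ ∧
    ∀ F : Set Z2, F.Finite → F ⊆ SectorZ e₁ e₂ →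
      CodesZ X (SectorZ e₁ e₂ \ F) (SectorZ e₁ e₂ \ F₀)

/-- The sector based at the vertex `i` of the polygon `P`: lattice points in the convex
cone with apex `P.vert i` spanned by the two edges of `P` incident to that vertex. -/
def vertexSector (P : IntPolygon) (i : Fin (P.n + 3)) : Set Z2 :=
  {p | ∃ s t : ℝ, 0 ≤ s ∧ 0 ≤ t ∧
    toR2 p = toR2 (P.vert i) + s • toR2 (P.vert (i - 1) - P.vert i)
      + t • toR2 (P.vert (i + 1) - P.vert i)}

/-- `P` is a coding polygon for some recoding of `X`. -/
def HasRecodingPolygon {A : Type*} (X : Set (Config A)) (P : IntPolygon) : Prop :=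
  ∃ (A' : Type) (_ : Fintype A') (Y : Set (Config A')),
    IsSubshift Y ∧ IsRecoding X Y ∧ IsCodingPolygon Y P

/-- `P` is a minimal recoding polygon for `X`. -/
def IsMinimalRecodingPolygon {A : Type*} (X : Set (Config A)) (P : IntPolygon) : Prop :=
  HasRecodingPolygon X P ∧
  (∀ Q : IntPolygon, HasRecodingPolygon X Q → P.n ≤ Q.n) ∧
  (∀ Q : IntPolygon, HasRecodingPolygon X Q → Q.n = P.n →
    Q.carrier ⊆ P.carrier → Q.carrier = P.carrier)


/- ===== auxiliary lemmas ===== -/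

lemma crossZ_add_right' (v a b : Z2) : crossZ v (a + b) = crossZ v a + crossZ v b := by
  simp only [crossZ, Prod.fst_add, Prod.snd_add]; ring

lemma crossZ_sub_right' (v a b : Z2) : crossZ v (a - b) = crossZ v a - crossZ v b := by
  simp only [crossZ, Prod.fst_sub, Prod.snd_sub]; ring

lemma crossZ_smul_right' (v : Z2) (k : ℤ) (b : Z2) : crossZ v (k • b) = k * crossZ v b := by
  simp only [crossZ, Prod.smul_fst, Prod.smul_snd, smul_eq_mul]; ring

lemma toR2_inj : Function.Injective toR2 := by
  intro p q h
  have h1 : (p.1 : ℝ) = q.1 := congrArg Prod.fst h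
  have h2 : (p.2 : ℝ) = q.2 := congrArg Prod.snd h
  exact Prod.ext (by exact_mod_cast h1) (by exact_mod_cast h2)

lemma mem_leftHalfPlane' (v p : Z2) :
    toR2 p ∈ leftHalfPlane (toR2 v) ↔ 0 ≤ crossZ v p := by
  have h : (v.1 : ℝ) * (p.2 : ℝ) - (v.2 : ℝ) * (p.1 : ℝ) = ((crossZ v p : ℤ) : ℝ) := by
    simp only [crossZ]; push_cast; ring
  simp only [leftHalfPlane, Set.mem_setOf_eq, toR2, h]
  exact_mod_cast Iff.rfl

lemma mem_lineL0' (v p : Z2) : toR2 p ∈ lineL0 v ↔ crossZ v p = -1 := by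
  have h : (v.1 : ℝ) * (p.2 : ℝ) - (v.2 : ℝ) * (p.1 : ℝ) = ((crossZ v p : ℤ) : ℝ) := by
    simp only [crossZ]; push_cast; ring
  simp only [lineL0, Set.mem_setOf_eq, toR2, h]
  constructor
  · intro hh; exact_mod_cast hh
  · intro hh; exact_mod_cast hh

lemma mem_blockOn' (v z : Z2) (m : ℕ) (p : Z2) :
    toR2 p ∈ blockOn v z m ↔ ∃ k : ℕ, k < m ∧ p = z + (k : ℤ) • v := by
  constructor
  · rintro ⟨k, hk, hpe⟩
    exact ⟨k, hk, (toR2_inj hpe).symm⟩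
  · rintro ⟨k, hk, rfl⟩
    exact ⟨k, hk, rfl⟩

lemma exists_crossZ_eq_one (v : Z2) (h : Int.gcd v.1 v.2 = 1) :
    ∃ w : Z2, crossZ v w = 1 := by
  have hb := Int.gcd_eq_gcd_ab v.1 v.2
  refine ⟨(-(Int.gcdB v.1 v.2), Int.gcdA v.1 v.2), ?_⟩
  simp only [crossZ]
  rw [h] at hb
  push_cast at hb ⊢
  linarith

lemma decomp_of_crossZ_zero (v w p : Z2) (hw : crossZ v w = 1) (hp : crossZ v p = 0) :
    p = crossZ p w • v := by
  simp only [crossZ] at hw hp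
  have h1 : p.1 = (p.1 * w.2 - p.2 * w.1) * v.1 := by linear_combination (-p.1) * hw + w.1 * hp
  have h2 : p.2 = (p.1 * w.2 - p.2 * w.1) * v.2 := by linear_combination (-p.2) * hw + w.2 * hp
  exact Prod.ext (by simpa [crossZ] using h1) (by simpa [crossZ] using h2)

lemma closing_step {A : Type*} {X : Set (Config A)} (hX : IsSubshift X)
    (v w : Z2) (hw : crossZ v w = 1) (N : ℕ)
    (hN : ∀ z : Z2, v.1 * z.2 - v.2 * z.1 = -1 → ∀ m : ℕ, N ≤ m →
      Codes X (leftHalfPlane (toR2 v) ∪ blockOn v z m) (lineL0 v))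
    (c : ℤ) (z : Z2) (hz : crossZ v z = c - 1) (m : ℕ) (hm : N ≤ m)
    {x x' : Config A} (hx : x ∈ X) (hx' : x' ∈ X)
    (hH : ∀ p : Z2, c ≤ crossZ v p → x p = x' p)
    (hB : ∀ k : ℕ, k < m → x (z + (k : ℤ) • v) = x' (z + (k : ℤ) • v)) :
    ∀ p : Z2, crossZ v p = c - 1 → x p = x' p := by
  set t : Z2 := c • w with ht
  have hct : crossZ v t = c := by rw [ht, crossZ_smul_right', hw, mul_one]
  have hz' : crossZ v (z - t) = -1 := by rw [crossZ_sub_right', hz, hct]; ring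
  have hhyp : ∀ p : Z2, toR2 p ∈ leftHalfPlane (toR2 v) ∪ blockOn v (z - t) m →
      shiftAct t x p = shiftAct t x' p := by
    intro p hp
    rcases hp with hp | hp
    · have h0 : 0 ≤ crossZ v p := (mem_leftHalfPlane' v p).mp hp
      have hc : c ≤ crossZ v (t + p) := by rw [crossZ_add_right', hct]; omega
      exact hH _ hc
    · rcases (mem_blockOn' v (z - t) m p).mp hp with ⟨k, hk, rfl⟩
      have h3 : t + (z - t + (k : ℤ) • v) = z + (k : ℤ) • v := by abel
      simpa only [shiftAct, h3] using hB k hk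
  have hmain := hN (z - t) hz' m hm (shiftAct t x) (hX.2 t x hx)
      (shiftAct t x') (hX.2 t x' hx') hhyp
  intro p hp
  have h1 : crossZ v (p - t) = -1 := by rw [crossZ_sub_right', hp, hct]; ring
  have h2 := hmain (p - t) ((mem_lineL0' v (p - t)).mpr h1)
  have h3 : t + (p - t) = p := by abel
  simpa only [shiftAct, h3] using h2
lemma crossZ_self' (v : Z2) : crossZ v v = 0 := by simp only [crossZ]; ring


/-- a recoding preserves the closing property of rational
nonexpansive rays, in both directions. -/
theorem statement7 {A A' : Type} [Fintype A] [Nonempty A] [Fintype A'] [Nonempty A']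
    (X : Set (Config A)) (Y : Set (Config A'))
    (hX : IsSubshift X) (hY : IsSubshift Y)
    (F : Set Z2) (hF : F.Finite) (hrec : IsRecodingVia X Y F)
    (v : Z2) (hprim : Int.gcd v.1 v.2 = 1)
    (hne : ¬ ExpansiveRay X (toR2 v)) :
    (ClosingRay X v ↔ ClosingRay Y v) := by
  letI : TopologicalSpace A := ⊥
  letI : TopologicalSpace A' := ⊥
  obtain ⟨Ψ, hequiv, hiff⟩ := hrec
  rcases Set.eq_empty_or_nonempty F with hFe | hFne
  · -- F empty: both X and Y are "trivial" for coding purposes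
    subst hFe
    have hYtriv : ∀ y, y ∈ Y → ∀ y', y' ∈ Y → ∀ u : Z2, y u = y' u := by
      intro y hy y' hy' u
      have h := (hiff u (Ψ.symm ⟨y, hy⟩) (Ψ.symm ⟨y', hy'⟩)).mpr
        (by intro f hf; simp at hf)
      rwa [Ψ.apply_symm_apply, Ψ.apply_symm_apply] at h
    have hXtriv : ∀ x, x ∈ X → ∀ x', x' ∈ X → ∀ u : Z2, x u = x' u := by
      intro x hx x' hx' u
      have h : Ψ ⟨x, hx⟩ = Ψ ⟨x', hx'⟩ := by
        apply Subtype.ext; funext u'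
        exact (hiff u' ⟨x, hx⟩ ⟨x', hx'⟩).mpr (by intro f hf; simp at hf)
      have h2 : (⟨x, hx⟩ : X) = ⟨x', hx'⟩ := Ψ.injective h
      exact congrFun (congrArg Subtype.val h2) u
    constructor
    · intro _
      exact ⟨0, fun z hz m hm x hx x' hx' _ p hp => hYtriv x hx x' hx' p⟩
    · intro _
      exact ⟨0, fun z hz m hm x hx x' hx' _ p hp => hXtriv x hx x' hx' p⟩
  · obtain ⟨w, hw⟩ := exists_crossZ_eq_one v hprim
    have hFs : hF.toFinset.Nonempty := hF.toFinset_nonempty.mpr hFne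
    obtain ⟨f₀, hf₀mem, hf₀⟩ := Finset.exists_mem_eq_inf' hFs (fun f => crossZ v f)
    have hf₀F : f₀ ∈ F := hF.mem_toFinset.mp hf₀mem
    have hmin : ∀ f ∈ F, crossZ v f₀ ≤ crossZ v f := by
      intro f hf
      rw [← hf₀]
      exact Finset.inf'_le _ (hF.mem_toFinset.mpr hf)
    constructor
    · -- X closing → Y closing
      rintro ⟨N, hN⟩
      refine ⟨N, ?_⟩
      intro z hz m hm y hy y' hy' hagree p hp
      have key : ∀ u : Z2, y u = y' u ↔
          ∀ f ∈ F, (↑(Ψ.symm ⟨y, hy⟩) : Config A) (f + u)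
            = (↑(Ψ.symm ⟨y', hy'⟩) : Config A) (f + u) := by
        intro u
        have h := hiff u (Ψ.symm ⟨y, hy⟩) (Ψ.symm ⟨y', hy'⟩)
        rwa [Ψ.apply_symm_apply, Ψ.apply_symm_apply] at h
      set x : Config A := ↑(Ψ.symm ⟨y, hy⟩) with hxdef
      set x' : Config A := ↑(Ψ.symm ⟨y', hy'⟩) with hx'def
      have hxX : x ∈ X := (Ψ.symm ⟨y, hy⟩).2
      have hx'X : x' ∈ X := (Ψ.symm ⟨y', hy'⟩).2
      have hzc : crossZ v z = -1 := hz
      have hH : ∀ q : Z2, crossZ v f₀ ≤ crossZ v q → x q = x' q := by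
        intro q hq
        have hu : 0 ≤ crossZ v (q - f₀) := by
          rw [crossZ_sub_right']; omega
        have hyu : y (q - f₀) = y' (q - f₀) :=
          hagree (q - f₀) (Or.inl ((mem_leftHalfPlane' v _).mpr hu))
        have h := (key (q - f₀)).mp hyu f₀ hf₀F
        have he : f₀ + (q - f₀) = q := by abel
        rwa [he] at h
      have hB : ∀ k : ℕ, k < m →
          x (f₀ + z + (k : ℤ) • v) = x' (f₀ + z + (k : ℤ) • v) := by
        intro k hk
        have hyu : y (z + (k : ℤ) • v) = y' (z + (k : ℤ) • v) :=
          hagree _ (Or.inr ((mem_blockOn' v z m _).mpr ⟨k, hk, rfl⟩))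
        have h := (key _).mp hyu f₀ hf₀F
        rwa [← add_assoc] at h
      have hzstep : crossZ v (f₀ + z) = crossZ v f₀ - 1 := by
        rw [crossZ_add_right']; omega
      have hline := closing_step hX v w hw N hN (crossZ v f₀) (f₀ + z) hzstep m hm
        hxX hx'X hH hB
      have hall : ∀ q : Z2, crossZ v f₀ - 1 ≤ crossZ v q → x q = x' q := by
        intro q hq
        rcases eq_or_lt_of_le hq with h | h
        · exact hline q h.symm
        · exact hH q (by omega)
      have hpl : crossZ v p = -1 := (mem_lineL0' v p).mp hp
      refine (key p).mpr ?_
      intro f hf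
      refine hall (f + p) ?_
      rw [crossZ_add_right']
      have := hmin f hf
      omega
    · -- Y closing → X closing
      rintro ⟨N, hN⟩
      obtain ⟨M, hM⟩ : ∃ M : ℕ, ∀ f ∈ F, (crossZ (f - f₀) w).natAbs ≤ M :=
        ⟨hF.toFinset.sup' hFs (fun f => (crossZ (f - f₀) w).natAbs),
          fun f hf => Finset.le_sup' (fun g => (crossZ (g - f₀) w).natAbs) (hF.mem_toFinset.mpr hf)⟩
      refine ⟨N + 2 * M, ?_⟩
      intro z hz m hm x hx x' hx' hagree p hp
      have hzc : crossZ v z = -1 := hz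
      have key : ∀ u : Z2,
          (↑(Ψ ⟨x, hx⟩) : Config A') u = (↑(Ψ ⟨x', hx'⟩) : Config A') u ↔
            ∀ f ∈ F, x (f + u) = x' (f + u) := fun u => hiff u ⟨x, hx⟩ ⟨x', hx'⟩
      set y : Config A' := ↑(Ψ ⟨x, hx⟩) with hydef
      set y' : Config A' := ↑(Ψ ⟨x', hx'⟩) with hy'def
      have hyY : y ∈ Y := (Ψ ⟨x, hx⟩).2
      have hy'Y : y' ∈ Y := (Ψ ⟨x', hx'⟩).2
      have hHx : ∀ q : Z2, 0 ≤ crossZ v q → x q = x' q := fun q hq =>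
        hagree q (Or.inl ((mem_leftHalfPlane' v q).mpr hq))
      have hBx : ∀ k : ℕ, k < m → x (z + (k : ℤ) • v) = x' (z + (k : ℤ) • v) :=
        fun k hk => hagree _ (Or.inr ((mem_blockOn' v z m _).mpr ⟨k, hk, rfl⟩))
      have hHy : ∀ u : Z2, -(crossZ v f₀) ≤ crossZ v u → y u = y' u := by
        intro u hu
        refine (key u).mpr ?_
        intro f hf
        refine hHx (f + u) ?_
        rw [crossZ_add_right']
        have := hmin f hf
        omega
      have hzst : crossZ v (z - f₀ + (M : ℤ) • v) = -(crossZ v f₀) - 1 := by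
        rw [crossZ_add_right', crossZ_sub_right', crossZ_smul_right', crossZ_self']
        omega
      have hBy : ∀ k : ℕ, k < m - 2 * M →
          y (z - f₀ + (M : ℤ) • v + (k : ℤ) • v)
            = y' (z - f₀ + (M : ℤ) • v + (k : ℤ) • v) := by
        intro k hk
        refine (key _).mpr ?_
        intro f hf
        have hcf := hmin f hf
        rcases lt_or_eq_of_le hcf with hlt | heq
        · refine hHx _ ?_
          rw [crossZ_add_right', crossZ_add_right', crossZ_add_right',
            crossZ_sub_right', crossZ_smul_right', crossZ_smul_right', crossZ_self']
          omega
        · have h0 : crossZ v (f - f₀) = 0 := by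
            rw [crossZ_sub_right']; omega
          have hfd : f - f₀ = crossZ (f - f₀) w • v :=
            decomp_of_crossZ_zero v w (f - f₀) hw h0
          set a : ℤ := crossZ (f - f₀) w with hadef
          have haM : a.natAbs ≤ M := hM f hf
          have hfe : f = a • v + f₀ := by
            rw [← hfd]; abel
          have hpt : f + (z - f₀ + (M : ℤ) • v + (k : ℤ) • v)
              = z + (a + (M : ℤ) + (k : ℤ)) • v := by
            rw [hfe, add_smul, add_smul]
            abel
          obtain ⟨k', hk'⟩ : ∃ k' : ℕ, (k' : ℤ) = a + (M : ℤ) + (k : ℤ) :=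
            ⟨(a + (M : ℤ) + (k : ℤ)).toNat, by omega⟩
          have hk'm : k' < m := by omega
          have h := hBx k' hk'm
          rw [hk'] at h
          rwa [hpt]
      have hline := closing_step hY v w hw N hN (-(crossZ v f₀))
        (z - f₀ + (M : ℤ) • v) hzst (m - 2 * M) (by omega) hyY hy'Y hHy hBy
      have hpl : crossZ v p = -1 := (mem_lineL0' v p).mp hp
      have hu : crossZ v (p - f₀) = -(crossZ v f₀) - 1 := by
        rw [crossZ_sub_right']; omega
      have hyu : y (p - f₀) = y' (p - f₀) := hline _ hu
      have h := (key _).mp hyu f₀ hf₀F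
      have he : f₀ + (p - f₀) = p := by abel
      rwa [he] at h

end PolygonalShifts
end

section
/- Let X be a ℤ²-subshift, let S be the rational sector determined by rays (ℓ₁, ℓ₂), and let S_s be the supplementary sector determined by (ℓ₂, −ℓ₁). If S_s is weakly corner coding for X, then every ray contained in the interior of the cone spanned by ℓ₁ and ℓ₂ is expansive for X. -/
namespace PolygonalShifts

section Aux

lemma crossR_toR2 (a b : Z2) : crossR (toR2 a) (toR2 b) = (crossZ a b : ℝ) := by
  simp only [crossR, crossZ, toR2]
  push_cast
  ring

lemma toR2_eq_zero {p : Z2} (h : toR2 p = 0) : p = 0 := by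
  simp only [toR2, Prod.ext_iff, Prod.fst_zero, Prod.snd_zero] at h ⊢
  exact_mod_cast h

lemma toR2_add (a b : Z2) : toR2 (a + b) = toR2 a + toR2 b := by
  simp only [toR2, Prod.fst_add, Prod.snd_add, Prod.mk_add_mk, Prod.ext_iff]
  push_cast
  exact ⟨rfl, rfl⟩

lemma crossR_add_right (u a b : ℝ × ℝ) : crossR u (a + b) = crossR u a + crossR u b := by
  simp only [crossR, Prod.fst_add, Prod.snd_add]; ring

lemma crossR_smul_right (u v : ℝ × ℝ) (t : ℝ) : crossR u (t • v) = t * crossR u v := by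
  simp only [crossR, Prod.smul_fst, Prod.smul_snd, smul_eq_mul]; ring

lemma crossZ_neg_right (a b : Z2) : crossZ a (-b) = -crossZ a b := by
  simp only [crossZ, Prod.fst_neg, Prod.snd_neg]; ring

lemma crossZ_swap_neg (a b : Z2) : crossZ a (-b) = crossZ b a := by
  simp only [crossZ, Prod.fst_neg, Prod.snd_neg]; ring

/-- Membership in the supplementary sector gives nonnegative crosses against `e₁`, `e₂`. -/
lemma sector_cross_nonneg {e₁ e₂ : Z2} (he₁ : e₁ ≠ 0) (he₂ : e₂ ≠ 0)
    (hor : 0 < crossZ e₁ e₂) {p : Z2} (hp : p ∈ SectorZ e₂ (-e₁)) :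
    0 ≤ crossZ e₁ p ∧ 0 ≤ crossZ e₂ p := by
  have horR : (0:ℝ) < crossR (toR2 e₁) (toR2 e₂) := by
    rw [crossR_toR2]; exact_mod_cast hor
  have key : 0 ≤ crossR (toR2 e₁) (toR2 p) ∧ 0 ≤ crossR (toR2 e₂) (toR2 p) := by
    rcases hp with h | h | h
    · rcases h with h0 | h0 | ⟨r, s, hr, hs, hrs⟩
      · exact absurd (toR2_eq_zero h0) he₂
      · rw [h0]; constructor <;> simp [crossR]
      · have h1 := congrArg (crossR (toR2 e₁)) hrs
        have h2 := congrArg (crossR (toR2 e₂)) hrs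
        rw [crossR_smul_right, crossR_smul_right] at h1 h2
        have he22 : crossR (toR2 e₂) (toR2 e₂) = 0 := by simp [crossR]; ring
        constructor
        · nlinarith
        · nlinarith
    · rcases h with h0 | h0 | ⟨r, s, hr, hs, hrs⟩
      · exact absurd (neg_eq_zero.mp (toR2_eq_zero h0)) he₁
      · rw [h0]; constructor <;> simp [crossR]
      · have h1 := congrArg (crossR (toR2 e₁)) hrs
        have h2 := congrArg (crossR (toR2 e₂)) hrs
        rw [crossR_smul_right, crossR_smul_right] at h1 h2
        rw [crossR_toR2, crossZ_neg_right] at h1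
        rw [crossR_toR2, crossZ_swap_neg] at h2
        have horR' : (0:ℝ) < (crossZ e₁ e₂ : ℝ) := by exact_mod_cast hor
        have h11 : crossZ e₁ e₁ = 0 := by simp [crossZ, mul_comm]
        rw [h11] at h1
        norm_num at h1
        have h1' : crossR (toR2 e₁) (toR2 p) = 0 := by
          rcases h1 with h1 | h1
          · exact absurd h1 (ne_of_gt hs)
          · exact h1
        constructor
        · exact le_of_eq h1'.symm
        · nlinarith
    · have hzp : crossZ p (-e₁) = crossZ e₁ p := by
        simp only [crossZ, Prod.fst_neg, Prod.snd_neg]; ring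
      constructor
      · rw [crossR_toR2]; exact_mod_cast (hzp ▸ h.2).le
      · rw [crossR_toR2]; exact_mod_cast h.1.le
  constructor
  · have := key.1; rw [crossR_toR2] at this; exact_mod_cast this
  · have := key.2; rw [crossR_toR2] at this; exact_mod_cast this

/-- The key Plücker identity. -/
lemma pluecker (e₁ e₂ : Z2) (u : ℝ × ℝ) (p : Z2) :
    (crossZ e₁ e₂ : ℝ) * crossR u (toR2 p) =
      (crossZ e₁ p : ℝ) * crossR u (toR2 e₂) + (crossZ e₂ p : ℝ) * crossR (toR2 e₁) u := by
  simp only [crossZ, crossR, toR2]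
  push_cast
  ring

/-- The map `p ↦ (crossZ e₁ p, crossZ e₂ p)` is injective when `e₁, e₂` are independent. -/
lemma cross_pair_injective {e₁ e₂ : Z2} (hor : 0 < crossZ e₁ e₂) :
    Function.Injective (fun p : Z2 => (crossZ e₁ p, crossZ e₂ p)) := by
  intro p p' h
  have hD : crossZ e₁ e₂ ≠ 0 := ne_of_gt hor
  simp only [Prod.ext_iff] at h ⊢
  have h1 : crossZ e₁ p = crossZ e₁ p' := h.1
  have h2 : crossZ e₂ p = crossZ e₂ p' := h.2
  simp only [crossZ] at h1 h2 hD
  constructor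
  · have : (e₁.1 * e₂.2 - e₁.2 * e₂.1) * p.1 = (e₁.1 * e₂.2 - e₁.2 * e₂.1) * p'.1 := by
      linear_combination e₂.1 * h1 - e₁.1 * h2
    exact mul_left_cancel₀ hD this
  · have : (e₁.1 * e₂.2 - e₁.2 * e₂.1) * p.2 = (e₁.1 * e₂.2 - e₁.2 * e₂.1) * p'.2 := by
      linear_combination e₂.2 * h1 - e₁.2 * h2
    exact mul_left_cancel₀ hD this

/-- Finiteness of the strip in the sector below a given level of `crossR u`. -/
lemma finite_sector_strip {e₁ e₂ : Z2} (he₁ : e₁ ≠ 0) (he₂ : e₂ ≠ 0)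
    (hor : 0 < crossZ e₁ e₂) (u : ℝ × ℝ)
    (hc1 : 0 < crossR (toR2 e₁) u) (hc2 : 0 < crossR u (toR2 e₂)) (M : ℝ) :
    {p : Z2 | p ∈ SectorZ e₂ (-e₁) ∧ crossR u (toR2 p) < M}.Finite := by
  set D : ℝ := (crossZ e₁ e₂ : ℝ) with hDdef
  have hD : (0:ℝ) < D := by rw [hDdef]; exact_mod_cast hor
  set A : ℤ := ⌈D * M / crossR u (toR2 e₂)⌉ with hA
  set B : ℤ := ⌈D * M / crossR (toR2 e₁) u⌉ with hB
  have hsub : {p : Z2 | p ∈ SectorZ e₂ (-e₁) ∧ crossR u (toR2 p) < M} ⊆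
      (fun p : Z2 => (crossZ e₁ p, crossZ e₂ p)) ⁻¹'
        (Set.Icc ((0:ℤ), (0:ℤ)) (A, B)) := by
    rintro p ⟨hp, hlt⟩
    obtain ⟨ha, hb⟩ := sector_cross_nonneg he₁ he₂ hor hp
    have hid := pluecker e₁ e₂ u p
    have haR : (0:ℝ) ≤ (crossZ e₁ p : ℝ) := by exact_mod_cast ha
    have hbR : (0:ℝ) ≤ (crossZ e₂ p : ℝ) := by exact_mod_cast hb
    have hDa : (crossZ e₁ p : ℝ) * crossR u (toR2 e₂) < D * M := by nlinarith
    have hDb : (crossZ e₂ p : ℝ) * crossR (toR2 e₁) u < D * M := by nlinarith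
    have haA : crossZ e₁ p ≤ A := by
      have : (crossZ e₁ p : ℝ) ≤ D * M / crossR u (toR2 e₂) := by
        rw [le_div_iff₀ hc2]; linarith
      exact_mod_cast this.trans (Int.le_ceil _)
    have hbB : crossZ e₂ p ≤ B := by
      have : (crossZ e₂ p : ℝ) ≤ D * M / crossR (toR2 e₁) u := by
        rw [le_div_iff₀ hc1]; linarith
      exact_mod_cast this.trans (Int.le_ceil _)
    exact Set.mem_preimage.mpr ⟨⟨ha, hb⟩, ⟨haA, hbB⟩⟩
  exact Set.Finite.subset
    ((Set.finite_Icc ((0:ℤ),(0:ℤ)) (A, B)).preimage (cross_pair_injective hor).injOn)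
    hsub

end Aux

/-- if the supplementary sector determined by `(ℓ₂, −ℓ₁)` is weakly
corner coding for `X`, then every ray in the interior of the cone spanned by `ℓ₁`
and `ℓ₂` is expansive for `X`. -/
theorem statement12 {A : Type} [Fintype A] [Nonempty A] (X : Set (Config A))
    (hX : IsSubshift X)
    (e₁ e₂ : Z2) (he₁ : e₁ ≠ 0) (he₂ : e₂ ≠ 0) (hor : 0 < crossZ e₁ e₂)
    (hwcc : IsWeaklyCornerCoding X e₂ (-e₁)) :
    ∀ u : ℝ × ℝ, u ≠ 0 → 0 < crossR (toR2 e₁) u → 0 < crossR u (toR2 e₂) →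
      ExpansiveRay X u := by
  intro u hu hc1 hc2
  intro x hx x' hx' hagree p _
  obtain ⟨F₀, hF₀fin, hF₀sub, hF₀⟩ := hwcc
  -- find w = k • e₂ in the sector avoiding F₀
  have hinj : Function.Injective (fun k : ℕ => (k : ℤ) • e₂) := by
    intro k k' h
    have h0 : e₂.1 ≠ 0 ∨ e₂.2 ≠ 0 := by
      by_contra hcon
      push_neg at hcon
      exact he₂ (Prod.ext_iff.mpr ⟨hcon.1, hcon.2⟩)
    rcases h0 with h1 | h1
    · have := congrArg Prod.fst h
      simp only [Prod.smul_fst, smul_eq_mul] at this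
      exact_mod_cast mul_right_cancel₀ h1 this
    · have := congrArg Prod.snd h
      simp only [Prod.smul_snd, smul_eq_mul] at this
      exact_mod_cast mul_right_cancel₀ h1 this
  have hpre : ((fun k : ℕ => (k : ℤ) • e₂) ⁻¹' F₀).Finite := hF₀fin.preimage hinj.injOn
  obtain ⟨k, hk⟩ := hpre.infinite_compl.nonempty
  set w : Z2 := (k : ℤ) • e₂ with hwdef
  have hwS : w ∈ SectorZ e₂ (-e₁) := by
    left
    have : toR2 w = (k : ℝ) • toR2 e₂ := by
      simp only [hwdef, toR2, Prod.smul_fst, Prod.smul_snd, smul_eq_mul, Prod.ext_iff]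
      push_cast
      exact ⟨rfl, rfl⟩
    rw [this]
    exact SameRay.sameRay_nonneg_smul_right _ (by positivity)
  set q : Z2 := p - w with hqdef
  set F : Set Z2 := {f | f ∈ SectorZ e₂ (-e₁) ∧ toR2 (q + f) ∉ leftHalfPlane u} with hFdef
  have hFfin : F.Finite := by
    apply Set.Finite.subset (finite_sector_strip he₁ he₂ hor u hc1 hc2
      (- crossR u (toR2 q)))
    rintro f ⟨hf1, hf2⟩
    refine ⟨hf1, ?_⟩
    have : ¬ (0 ≤ crossR u (toR2 (q + f))) := hf2
    rw [toR2_add, crossR_add_right] at this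
    linarith [not_le.mp this]
  have hFsub : F ⊆ SectorZ e₂ (-e₁) := fun f hf => hf.1
  have hcode := hF₀ F hFfin hFsub (shiftAct q x) (hX.2 q x hx) (shiftAct q x')
    (hX.2 q x' hx')
  have hagr : ∀ f ∈ SectorZ e₂ (-e₁) \ F, shiftAct q x f = shiftAct q x' f := by
    rintro f ⟨hfS, hfF⟩
    have hH : toR2 (q + f) ∈ leftHalfPlane u := by
      by_contra hcon
      exact hfF ⟨hfS, hcon⟩
    exact hagree (q + f) hH
  have hwF₀ : w ∈ SectorZ e₂ (-e₁) \ F₀ := ⟨hwS, hk⟩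
  have := hcode hagr w hwF₀
  simpa only [shiftAct, hqdef, sub_add_cancel] using this

end PolygonalShifts
end
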